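/- arXiv:1901.04213 — 3 statements merged into one kernel-verified Lean document; each statement's English description precedes it below -/
import Mathlib

section
/- Let Ω be a complete separable metric space and {μ_i} a sequence of finite Borel measures on Ω that is uniformly tight and uniformly bounded in total variation norm. Then {μ_i} admits a subsequence converging weakly to some finite Borel measure on Ω. -/
open MeasureTheory Filter Topology ENNReal Metric

set_option maxHeartbeats 1000000 in
lemma prokhorov_prob {Ω : Type*} [MetricSpace Ω] [TopologicalSpace.SeparableSpace Ω]
    [MeasurableSpace Ω] [BorelSpace Ω]
    (μ : ℕ → Measure Ω) [∀ i, IsProbabilityMeasure (μ i)]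
    (htight : ∀ ε : ℝ≥0∞, 0 < ε → ∃ K : Set Ω, IsCompact K ∧ ∀ i, μ i Kᶜ < ε) :
    ∃ (φ : ℕ → ℕ) (ν : Measure Ω), StrictMono φ ∧ IsProbabilityMeasure ν ∧
      ∀ f : BoundedContinuousFunction Ω ℝ,
        Tendsto (fun k => ∫ x, f x ∂(μ (φ k))) atTop (𝓝 (∫ x, f x ∂ν)) := by
  classical
  -- Step 1 : an increasing sequence of compacts
  have hex : ∀ n : ℕ, ∃ K : Set Ω, IsCompact K ∧ ∀ i, μ i Kᶜ < ((n : ℝ≥0∞)+1)⁻¹ := by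
    intro n
    refine htight _ (ENNReal.inv_pos.mpr (by simp))
  choose K' hK'c hK'lt using hex
  set K : ℕ → Set Ω := fun n => ⋃ m ∈ Set.Iic n, K' m with hK
  have hKc : ∀ n, IsCompact (K n) := fun n =>
    (Set.finite_Iic n).isCompact_biUnion (fun m _ => hK'c m)
  have hKmono : Monotone K := fun a b hab =>
    Set.biUnion_subset_biUnion_left (Set.Iic_subset_Iic.mpr hab)
  have hK'K : ∀ n, K' n ⊆ K n := fun n =>
    Set.subset_biUnion_of_mem (Set.mem_Iic.mpr le_rfl)
  have hKlt : ∀ i n, μ i (K n)ᶜ < ((n : ℝ≥0∞)+1)⁻¹ := fun i n =>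
    lt_of_le_of_lt (measure_mono (Set.compl_subset_compl.mpr (hK'K n))) (hK'lt n i)
  have hKge : ∀ (i n : ℕ), 1 - ((n : ℝ≥0∞)+1)⁻¹ ≤ μ i (K n) := by
    intro i n
    rw [tsub_le_iff_right]
    calc (1 : ℝ≥0∞) = μ i Set.univ := (measure_univ).symm
      _ = μ i (K n ∪ (K n)ᶜ) := by rw [Set.union_compl_self]
      _ ≤ μ i (K n) + μ i (K n)ᶜ := measure_union_le _ _
      _ ≤ μ i (K n) + ((n : ℝ≥0∞)+1)⁻¹ := by
          exact add_le_add le_rfl (le_of_lt (hKlt i n))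
  -- Step 2 : countable dense set and countable family of compact sets
  obtain ⟨D, hDcount, hDdense⟩ := TopologicalSpace.exists_countable_dense Ω
  haveI : Countable D := hDcount.to_subtype
  set basic : D × ℚ × ℕ → Set Ω :=
    fun q => closedBall (q.1 : Ω) (q.2.1 : ℝ) ∩ K q.2.2 with hbasic
  have hbasic_compact : ∀ q, IsCompact (basic q) := fun q =>
    (hKc q.2.2).inter_left isClosed_closedBall
  set A : List (D × ℚ × ℕ) → Set Ω := fun l => ⋃ q ∈ l, basic q with hA
  have hA_compact : ∀ l, IsCompact (A l) := fun l =>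
    (List.finite_toSet l).isCompact_biUnion (fun q _ => hbasic_compact q)
  have hA_meas : ∀ l, MeasurableSet (A l) := fun l =>
    (hA_compact l).isClosed.measurableSet
  have hA_nil : A [] = ∅ := by simp [hA]
  have hA_append : ∀ l l', A (l ++ l') = A l ∪ A l' := by
    intro l l'
    ext x
    simp only [hA, Set.mem_iUnion, List.mem_append, Set.mem_union]
    constructor
    · rintro ⟨q, (hq | hq), hx⟩
      exacts [Or.inl ⟨q, hq, hx⟩, Or.inr ⟨q, hq, hx⟩]
    · rintro (⟨q, hq, hx⟩ | ⟨q, hq, hx⟩)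
      exacts [⟨q, Or.inl hq, hx⟩, ⟨q, Or.inr hq, hx⟩]
  have hA_K : ∀ l, ∃ n, A l ⊆ K n := by
    intro l
    induction l with
    | nil => exact ⟨0, by simp [hA_nil]⟩
    | cons q t ih =>
        obtain ⟨n, hn⟩ := ih
        refine ⟨max q.2.2 n, ?_⟩
        have h1 : A (q :: t) = basic q ∪ A t := by
          have h2 := hA_append [q] t
          have h3 : A [q] = basic q := by simp [hA]
          simpa [h3] using h2
        rw [h1]
        refine Set.union_subset ?_ (hn.trans (hKmono (le_max_right _ _)))
        exact (Set.inter_subset_right).trans (hKmono (le_max_left _ _))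
  -- The `star` covering lemma
  have star : ∀ (B G : Set Ω), IsCompact B → IsOpen G → B ⊆ G → (∃ n, B ⊆ K n) →
      ∃ l, B ⊆ A l ∧ A l ⊆ G := by
    rintro B G hB hG hBG ⟨n, hBK⟩
    have hcov : ∀ x : B, ∃ q : D × ℚ × ℕ, q.2.2 = n ∧
        (x : Ω) ∈ ball (q.1 : Ω) (q.2.1 : ℝ) ∧ closedBall (q.1 : Ω) (q.2.1 : ℝ) ⊆ G := by
      rintro ⟨x, hx⟩
      obtain ⟨r, hr, hball⟩ := Metric.isOpen_iff.mp hG x (hBG hx)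
      obtain ⟨q, hq0, hq⟩ := exists_rat_btwn (by linarith : (0:ℝ) < r/3)
      obtain ⟨d, hd, hdx⟩ := hDdense.exists_dist_lt x hq0
      refine ⟨⟨⟨d, hd⟩, q, n⟩, rfl, ?_, ?_⟩
      · simpa [mem_ball, dist_comm] using hdx
      · intro y hy
        apply hball
        have : dist y x ≤ dist y d + dist d x := dist_triangle _ _ _
        have h1 : dist y d ≤ (q:ℝ) := mem_closedBall.mp hy
        have h2 : dist d x < (q:ℝ) := by rwa [dist_comm]
        have : dist y x < r := by
          calc dist y x ≤ dist y d + dist d x := this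
            _ < (q:ℝ) + (q:ℝ) := by linarith
            _ < r := by linarith
        exact mem_ball.mpr this
    choose Q hQn hQball hQsub using hcov
    obtain ⟨t, ht⟩ :=
      hB.elim_finite_subcover (fun x : B => ball ((Q x).1 : Ω) ((Q x).2.1 : ℝ))
        (fun x => isOpen_ball)
        (by
          intro x hx
          exact Set.mem_iUnion.mpr ⟨⟨x, hx⟩, hQball ⟨x, hx⟩⟩)
    set l : List (D × ℚ × ℕ) := t.toList.map Q with hl
    refine ⟨l, ?_, ?_⟩
    · intro x hx
      obtain ⟨x₀, hx₀, hxball⟩ := Set.mem_iUnion₂.mp (ht hx)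
      have hmem : Q x₀ ∈ l := by
        rw [hl, List.mem_map]
        exact ⟨x₀, Finset.mem_toList.mpr hx₀, rfl⟩
      have hxb : x ∈ basic (Q x₀) := by
        refine ⟨ball_subset_closedBall hxball, ?_⟩
        rw [hQn x₀]
        exact hBK hx
      exact Set.mem_biUnion hmem hxb
    · intro x hx
      obtain ⟨q, hq, hxq⟩ := Set.mem_iUnion₂.mp hx
      rw [hl, List.mem_map] at hq
      obtain ⟨x₀, hx₀, rfl⟩ := hq
      exact hQsub x₀ hxq.1
  -- Step 3 : diagonal extraction of a subsequence along which all μ (A l) converge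
  let J := List (D × ℚ × ℕ)
  set F : ℕ → J → ℝ := fun i l => (μ i (A l)).toReal with hF
  have hS : IsCompact (Set.univ.pi (fun _ : J => Set.Icc (0:ℝ) 1)) :=
    isCompact_univ_pi (fun _ => isCompact_Icc)
  have hFS : ∀ i, F i ∈ Set.univ.pi (fun _ : J => Set.Icc (0:ℝ) 1) := by
    intro i l _
    refine ⟨ENNReal.toReal_nonneg, ?_⟩
    have h1 : μ i (A l) ≤ 1 := prob_le_one
    calc (μ i (A l)).toReal ≤ (1 : ℝ≥0∞).toReal :=
          ENNReal.toReal_mono ENNReal.one_ne_top h1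
      _ = 1 := by simp
  obtain ⟨L, hLS, φ, hφ, hφlim⟩ := hS.isSeqCompact hFS
  have hptlim : ∀ l : J, Tendsto (fun k => F (φ k) l) atTop (𝓝 (L l)) := by
    intro l
    exact (tendsto_pi_nhds.mp hφlim) l
  set α : J → ℝ≥0∞ := fun l => ENNReal.ofReal (L l) with hα
  have halim : ∀ l : J, Tendsto (fun k => μ (φ k) (A l)) atTop (𝓝 (α l)) := by
    intro l
    have h1 : Tendsto (fun k => ENNReal.ofReal (F (φ k) l)) atTop (𝓝 (α l)) :=
      (ENNReal.continuous_ofReal.tendsto _).comp (hptlim l)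
    have h2 : ∀ k, ENNReal.ofReal (F (φ k) l) = μ (φ k) (A l) := by
      intro k
      exact ENNReal.ofReal_toReal (measure_ne_top _ _)
    simpa only [h2] using h1
  have hαle1 : ∀ l, α l ≤ 1 := fun l =>
    le_of_tendsto (halim l) (Eventually.of_forall (fun k => prob_le_one))
  have hα_mono : ∀ l l', A l ⊆ A l' → α l ≤ α l' := fun l l' h =>
    le_of_tendsto_of_tendsto' (halim l) (halim l') (fun k => measure_mono h)
  have hα_subadd : ∀ l l', α (l ++ l') ≤ α l + α l' := by
    intro l l'
    refine le_of_tendsto_of_tendsto' (halim _) ((halim l).add (halim l')) (fun k => ?_)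
    rw [hA_append]
    exact measure_union_le _ _
  have hα_add : ∀ l l', Disjoint (A l) (A l') → α l + α l' ≤ α (l ++ l') := by
    intro l l' hdis
    refine le_of_tendsto_of_tendsto' ((halim l).add (halim l')) (halim _) (fun k => ?_)
    rw [hA_append, measure_union hdis (hA_meas l')]
  have hα_empty : ∀ l, A l = ∅ → α l = 0 := by
    intro l h
    refine tendsto_nhds_unique (halim l) ?_
    simpa [h] using tendsto_const_nhds (x := (0:ℝ≥0∞)) (f := atTop (α := ℕ))
  -- Step 4 : the set function β and the outer measure
  set β : Set Ω → ℝ≥0∞ := fun G => ⨆ p : {l : J // A l ⊆ G}, α p.1 with hβ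
  have hβne : ∀ G : Set Ω, Nonempty {l : J // A l ⊆ G} := fun G =>
    ⟨⟨[], by rw [hA_nil]; exact Set.empty_subset G⟩⟩
  have hβ_le : ∀ (l : J) (G : Set Ω), A l ⊆ G → α l ≤ β G := by
    intro l G h
    exact le_iSup_of_le ⟨l, h⟩ le_rfl
  have hβ_mono : ∀ G G' : Set Ω, G ⊆ G' → β G ≤ β G' := by
    intro G G' h
    exact iSup_le (fun p => hβ_le p.1 G' (p.2.trans h))
  have hβ_le1 : ∀ G, β G ≤ 1 := fun G => iSup_le (fun p => hαle1 p.1)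
  have hβ_empty : β (∅ : Set Ω) = 0 := by
    refine le_antisymm (iSup_le (fun p => ?_)) (zero_le)
    rw [hα_empty p.1 (Set.subset_empty_iff.mp p.2)]
  -- key superadditivity on disjoint subsets
  have hβ_superadd : ∀ (U V₁ V₂ : Set Ω), V₁ ⊆ U → V₂ ⊆ U → Disjoint V₁ V₂ →
      β V₁ + β V₂ ≤ β U := by
    intro U V₁ V₂ h1 h2 hdis
    haveI := hβne V₁
    haveI := hβne V₂
    rw [hβ]
    rw [ENNReal.iSup_add]
    refine iSup_le (fun p => ?_)
    rw [ENNReal.add_iSup]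
    refine iSup_le (fun q => ?_)
    have hd : Disjoint (A p.1) (A q.1) := hdis.mono p.2 q.2
    refine (hα_add p.1 q.1 hd).trans ?_
    refine hβ_le _ _ ?_
    rw [hA_append]
    exact Set.union_subset (p.2.trans h1) (q.2.trans h2)
  -- subadditivity on two open sets
  have hβ_union : ∀ G₁ G₂ : Set Ω, IsOpen G₁ → IsOpen G₂ →
      β (G₁ ∪ G₂) ≤ β G₁ + β G₂ := by
    intro G₁ G₂ hG₁ hG₂
    refine iSup_le (fun p => ?_)
    obtain ⟨l, hl⟩ := p
    by_cases hc₁ : G₁ᶜ = ∅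
    · have h : A l ⊆ G₁ := by
        rw [Set.compl_empty_iff.mp hc₁]; exact Set.subset_univ _
      exact le_trans (hβ_le l G₁ h) le_self_add
    by_cases hc₂ : G₂ᶜ = ∅
    · have h : A l ⊆ G₂ := by
        rw [Set.compl_empty_iff.mp hc₂]; exact Set.subset_univ _
      exact le_trans (hβ_le l G₂ h) le_add_self
    · have hsub : ∀ (Ga Gb : Set Ω), IsOpen Gb → Gbᶜ ≠ ∅ → A l ⊆ Ga ∪ Gb →
          (A l ∩ {x | infDist x Gbᶜ ≤ infDist x Gaᶜ}) ⊆ Ga := by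
        intro Ga Gb hGb hGbne hAl
        rintro x ⟨hxA, hxd⟩
        by_contra hxG
        have hx1 : infDist x Gaᶜ = 0 := infDist_zero_of_mem hxG
        have hx2 : infDist x Gbᶜ = 0 :=
          le_antisymm (hx1 ▸ hxd) infDist_nonneg
        have hx3 : x ∈ Gbᶜ := by
          rw [(hGb.isClosed_compl).mem_iff_infDist_zero
            (Set.nonempty_iff_ne_empty.mpr hGbne)]
          exact hx2
        rcases hAl hxA with hxa | hxb
        · exact hxG hxa
        · exact hx3 hxb
      have hB₁c : IsCompact (A l ∩ {x | infDist x G₂ᶜ ≤ infDist x G₁ᶜ}) :=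
        (hA_compact l).inter_right
          (isClosed_le (continuous_infDist_pt _) (continuous_infDist_pt _))
      have hB₂c : IsCompact (A l ∩ {x | infDist x G₁ᶜ ≤ infDist x G₂ᶜ}) :=
        (hA_compact l).inter_right
          (isClosed_le (continuous_infDist_pt _) (continuous_infDist_pt _))
      obtain ⟨n, hn⟩ := hA_K l
      obtain ⟨l₁, hBl₁, hl₁G⟩ := star _ G₁ hB₁c hG₁
        (hsub G₁ G₂ hG₂ hc₂ hl) ⟨n, Set.inter_subset_left.trans hn⟩
      obtain ⟨l₂, hBl₂, hl₂G⟩ := star _ G₂ hB₂c hG₂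
        (hsub G₂ G₁ hG₁ hc₁ (by rwa [Set.union_comm])) ⟨n, Set.inter_subset_left.trans hn⟩
      have hcov : A l ⊆ A (l₁ ++ l₂) := by
        rw [hA_append]
        intro x hx
        rcases le_total (infDist x G₂ᶜ) (infDist x G₁ᶜ) with hle | hle
        · exact Or.inl (hBl₁ ⟨hx, hle⟩)
        · exact Or.inr (hBl₂ ⟨hx, hle⟩)
      calc α l ≤ α (l₁ ++ l₂) := hα_mono _ _ hcov
        _ ≤ α l₁ + α l₂ := hα_subadd _ _
        _ ≤ β G₁ + β G₂ := add_le_add (hβ_le _ _ hl₁G) (hβ_le _ _ hl₂G)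
  -- finite subadditivity of β over finite unions of open sets
  have hβ_finsum : ∀ (fs : Finset ℕ) (U : ℕ → Set Ω), (∀ j, IsOpen (U j)) →
      β (⋃ j ∈ fs, U j) ≤ ∑ j ∈ fs, β (U j) := by
    intro fs
    induction fs using Finset.induction with
    | empty => intro U hU; simp only [Finset.sum_empty]; simp [hβ_empty]
    | @insert a s ha ih =>
        intro U hU
        rw [Finset.set_biUnion_insert, Finset.sum_insert ha]
        refine (hβ_union _ _ (hU a) (isOpen_biUnion fun j _ => hU j)).trans ?_
        exact add_le_add le_rfl (ih U hU)
  -- Step 5 : the outer measure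
  set mf : Set Ω → ℝ≥0∞ := fun U => if IsOpen U then β U else ∞ with hmf
  have hmf_empty : mf ∅ = 0 := by
    rw [hmf]; simp only [isOpen_empty, if_pos]; exact hβ_empty
  set mstar := OuterMeasure.ofFunction mf hmf_empty with hmstar
  have hmstar_le : ∀ G : Set Ω, IsOpen G → mstar G ≤ β G := by
    intro G hG
    refine (OuterMeasure.ofFunction_le G).trans (le_of_eq ?_)
    rw [hmf]; simp [hG]
  -- metric outer measure
  have hmetric : mstar.IsMetric := by
    intro s t hst
    refine le_antisymm (measure_union_le s t) ?_
    obtain ⟨r, hr0, hr⟩ := hst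
    set r' : ℝ≥0∞ := min r 1 with hr'
    have hr'0 : r' ≠ 0 := by
      rw [hr']
      exact (lt_min (pos_iff_ne_zero.mpr hr0) zero_lt_one).ne'
    have hr'sep : ∀ x ∈ s, ∀ y ∈ t, r' ≤ edist x y := fun x hx y hy =>
      le_trans (min_le_left _ _) (hr x hx y hy)
    set T₁ : Set Ω := ⋃ x ∈ s, EMetric.ball x (r'/2) with hT₁
    set T₂ : Set Ω := ⋃ x ∈ t, EMetric.ball x (r'/2) with hT₂
    have hT₁o : IsOpen T₁ := isOpen_biUnion fun _ _ => EMetric.isOpen_ball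
    have hT₂o : IsOpen T₂ := isOpen_biUnion fun _ _ => EMetric.isOpen_ball
    have hsT₁ : s ⊆ T₁ := fun x hx =>
      Set.mem_biUnion hx (EMetric.mem_ball_self (ENNReal.half_pos hr'0))
    have htT₂ : t ⊆ T₂ := fun x hx =>
      Set.mem_biUnion hx (EMetric.mem_ball_self (ENNReal.half_pos hr'0))
    have hdisT : Disjoint T₁ T₂ := by
      rw [Set.disjoint_left]
      intro y hy₁ hy₂
      obtain ⟨x₁, hx₁, hyx₁⟩ := Set.mem_iUnion₂.mp hy₁
      obtain ⟨x₂, hx₂, hyx₂⟩ := Set.mem_iUnion₂.mp hy₂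
      have h1 : edist y x₁ < r'/2 := EMetric.mem_ball.mp hyx₁
      have h2 : edist y x₂ < r'/2 := EMetric.mem_ball.mp hyx₂
      have h3 : edist x₁ x₂ < r' := by
        calc edist x₁ x₂ ≤ edist x₁ y + edist y x₂ := edist_triangle _ _ _
          _ < r'/2 + r'/2 := by
              refine ENNReal.add_lt_add ?_ h2
              rwa [edist_comm]
          _ = r' := ENNReal.add_halves r'
      exact absurd (hr'sep x₁ hx₁ x₂ hx₂) (not_le.mpr h3)
    have key : ∀ U : Set Ω, β (U ∩ T₁) + β (U ∩ T₂) ≤ β U :=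
      fun U => hβ_superadd U _ _ Set.inter_subset_left Set.inter_subset_left
        (hdisT.mono Set.inter_subset_right Set.inter_subset_right)
    rw [hmstar, OuterMeasure.ofFunction_apply]
    refine le_iInf fun U => le_iInf fun hUcov => ?_
    by_cases hop : ∀ n, IsOpen (U n)
    · have hb1 : mstar s ≤ ∑' n, mf (U n ∩ T₁) := by
        have hcov : s ⊆ ⋃ n, (U n ∩ T₁) := by
          intro x hx
          obtain ⟨n, hn⟩ := Set.mem_iUnion.mp (hUcov (Or.inl hx))
          exact Set.mem_iUnion.mpr ⟨n, hn, hsT₁ hx⟩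
        calc mstar s ≤ mstar (⋃ n, (U n ∩ T₁)) := measure_mono hcov
          _ ≤ ∑' n, mstar (U n ∩ T₁) := measure_iUnion_le _
          _ ≤ ∑' n, mf (U n ∩ T₁) := ENNReal.tsum_le_tsum
              (fun n => OuterMeasure.ofFunction_le _)
      have hb2 : mstar t ≤ ∑' n, mf (U n ∩ T₂) := by
        have hcov : t ⊆ ⋃ n, (U n ∩ T₂) := by
          intro x hx
          obtain ⟨n, hn⟩ := Set.mem_iUnion.mp (hUcov (Or.inr hx))
          exact Set.mem_iUnion.mpr ⟨n, hn, htT₂ hx⟩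
        calc mstar t ≤ mstar (⋃ n, (U n ∩ T₂)) := measure_mono hcov
          _ ≤ ∑' n, mstar (U n ∩ T₂) := measure_iUnion_le _
          _ ≤ ∑' n, mf (U n ∩ T₂) := ENNReal.tsum_le_tsum
              (fun n => OuterMeasure.ofFunction_le _)
      calc mstar s + mstar t ≤ (∑' n, mf (U n ∩ T₁)) + ∑' n, mf (U n ∩ T₂) :=
            add_le_add hb1 hb2
        _ = ∑' n, (mf (U n ∩ T₁) + mf (U n ∩ T₂)) := (ENNReal.tsum_add).symm
        _ ≤ ∑' n, mf (U n) := by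
            refine ENNReal.tsum_le_tsum (fun n => ?_)
            have e1 : mf (U n ∩ T₁) = β (U n ∩ T₁) := by
              rw [hmf]; simp [(hop n).inter hT₁o]
            have e2 : mf (U n ∩ T₂) = β (U n ∩ T₂) := by
              rw [hmf]; simp [(hop n).inter hT₂o]
            have e3 : mf (U n) = β (U n) := by rw [hmf]; simp [hop n]
            rw [e1, e2, e3]
            exact key (U n)
    · push_neg at hop
      obtain ⟨n₀, hn₀⟩ := hop
      have htop : ∑' n, mf (U n) = ⊤ := by
        refine top_unique (le_trans ?_ (ENNReal.le_tsum n₀))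
        rw [hmf]; simp [hn₀]
      rw [htop]; exact le_top
  -- Step 6 : the measure ν
  have hborel : ‹MeasurableSpace Ω› ≤ mstar.caratheodory := by
    rw [BorelSpace.measurable_eq (α := Ω)]
    exact hmetric.borel_le_caratheodory
  set ν : Measure Ω := mstar.toMeasure hborel with hν
  have hν_eq : ∀ s : Set Ω, MeasurableSet s → ν s = mstar s := fun s hs =>
    toMeasure_apply _ _ hs
  -- liminf bound on open sets
  have hν_opens : ∀ G : Set Ω, IsOpen G → ν G ≤ atTop.liminf (fun k => μ (φ k) G) := by
    intro G hG
    rw [hν_eq G hG.measurableSet]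
    refine (hmstar_le G hG).trans (iSup_le fun p => ?_)
    have h1 : α p.1 = atTop.liminf (fun k => μ (φ k) (A p.1)) := ((halim p.1).liminf_eq).symm
    rw [h1]
    exact liminf_le_liminf (Eventually.of_forall fun k => measure_mono p.2)
  -- total mass of ν
  have hK_lb : ∀ n : ℕ, 1 - ((n:ℝ≥0∞)+1)⁻¹ ≤ mstar Set.univ := by
    intro n
    rw [hmstar, OuterMeasure.ofFunction_apply]
    refine le_iInf fun U => le_iInf fun hUcov => ?_
    by_cases hop : ∀ j, IsOpen (U j)
    · obtain ⟨fs, hfs⟩ := (hKc n).elim_finite_subcover U hop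
        ((Set.subset_univ _).trans hUcov)
      obtain ⟨l, hKl, hlG⟩ := star (K n) (⋃ j ∈ fs, U j) (hKc n)
        (isOpen_biUnion fun j _ => hop j) hfs ⟨n, subset_rfl⟩
      have h1 : 1 - ((n:ℝ≥0∞)+1)⁻¹ ≤ α l :=
        le_of_tendsto_of_tendsto' tendsto_const_nhds (halim l)
          (fun k => (hKge (φ k) n).trans (measure_mono hKl))
      calc 1 - ((n:ℝ≥0∞)+1)⁻¹ ≤ α l := h1
        _ ≤ β (⋃ j ∈ fs, U j) := hβ_le _ _ hlG
        _ ≤ ∑ j ∈ fs, β (U j) := hβ_finsum fs U hop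
        _ = ∑ j ∈ fs, mf (U j) := by
            refine Finset.sum_congr rfl fun j _ => ?_
            rw [hmf]; simp [hop j]
        _ ≤ ∑' j, mf (U j) := ENNReal.sum_le_tsum fs
    · push_neg at hop
      obtain ⟨j₀, hj₀⟩ := hop
      have htop : ∑' j, mf (U j) = ⊤ := by
        refine top_unique (le_trans ?_ (ENNReal.le_tsum j₀))
        rw [hmf]; simp [hj₀]
      rw [htop]; exact le_top
  have hμuniv : mstar Set.univ = 1 := by
    refine le_antisymm ((hmstar_le _ isOpen_univ).trans (hβ_le1 _)) ?_
    refine ENNReal.le_of_forall_pos_le_add fun ε hε _ => ?_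
    obtain ⟨n, hn⟩ := ENNReal.exists_inv_nat_lt
      (by exact_mod_cast hε.ne' : ((ε:ℝ≥0∞)) ≠ 0)
    have h2 : ((n:ℝ≥0∞)+1)⁻¹ ≤ (ε:ℝ≥0∞) := by
      refine le_trans ?_ hn.le
      exact ENNReal.inv_le_inv.mpr (by simp)
    calc (1:ℝ≥0∞) ≤ mstar Set.univ + ((n:ℝ≥0∞)+1)⁻¹ := tsub_le_iff_right.mp (hK_lb n)
      _ ≤ mstar Set.univ + ε := add_le_add le_rfl h2
  haveI hν_prob : IsProbabilityMeasure ν :=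
    ⟨by rw [hν_eq _ MeasurableSet.univ, hμuniv]⟩
  refine ⟨φ, ν, hφ, hν_prob, fun f => ?_⟩
  exact BoundedContinuousFunction.tendsto_integral_of_forall_integral_le_liminf_integral
    (fun g hg =>
      integral_le_liminf_integral_of_forall_isOpen_measure_le_liminf_measure hg hν_opens) f

set_option maxHeartbeats 1000000 in
/-- Generalized Prokhorov theorem (sufficiency direction): a uniformly tight sequence of
finite Borel measures on a Polish space, uniformly bounded in variation, admits a
weakly convergent subsequence. -/
theorem prokhorov_exists_weakly_convergent_subseq
    {Ω : Type*} [MetricSpace Ω] [CompleteSpace Ω] [TopologicalSpace.SeparableSpace Ω]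
    [MeasurableSpace Ω] [BorelSpace Ω]
    (μi : ℕ → Measure Ω) [∀ i, IsFiniteMeasure (μi i)]
    (htight : ∀ ε : ℝ≥0∞, 0 < ε → ∃ K : Set Ω, IsCompact K ∧ ∀ i, μi i Kᶜ < ε)
    (hbdd : ∃ C : ℝ≥0∞, C < ∞ ∧ ∀ i, μi i Set.univ ≤ C) :
    ∃ (φ : ℕ → ℕ) (ν : Measure Ω), StrictMono φ ∧ IsFiniteMeasure ν ∧
      ∀ h : Ω → ℝ, (∃ M : ℝ, ∀ x, |h x| ≤ M) → Continuous h →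
        Tendsto (fun k => ∫ x, h x ∂(μi (φ k))) atTop (𝓝 (∫ x, h x ∂ν)) := by
  obtain ⟨C, hCtop, hC⟩ := hbdd
  -- extract a subsequence along which the total masses converge
  set r : ℕ → ℝ := fun i => (μi i Set.univ).toReal with hr
  have hr_mem : ∀ i, r i ∈ Set.Icc (0:ℝ) C.toReal := fun i =>
    ⟨ENNReal.toReal_nonneg, ENNReal.toReal_mono hCtop.ne (hC i)⟩
  obtain ⟨m, hm_mem, ψ₁, hψ₁, hψ₁lim⟩ :=
    (isCompact_Icc (a := (0:ℝ)) (b := C.toReal)).isSeqCompact hr_mem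
  rcases eq_or_lt_of_le hm_mem.1 with hm0 | hmpos
  · -- zero mass limit : ν = 0
    refine ⟨ψ₁, 0, hψ₁, inferInstance, ?_⟩
    rintro h ⟨M, hM⟩ hcont
    simp only [integral_zero_measure]
    have hbound : ∀ k, ‖∫ x, h x ∂(μi (ψ₁ k))‖ ≤ (max M 0) * r (ψ₁ k) := by
      intro k
      refine norm_integral_le_of_norm_le_const (ae_of_all _ fun x => ?_)
      exact (Real.norm_eq_abs _ ▸ (hM x)).trans (le_max_left _ _)
    refine squeeze_zero_norm hbound ?_
    have : Tendsto (fun k => max M 0 * r (ψ₁ k)) atTop (𝓝 (max M 0 * m)) :=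
      (hψ₁lim.const_mul _)
    rw [← hm0, mul_zero] at this
    exact this
  · -- positive mass limit
    obtain ⟨N, hN⟩ := (eventually_atTop).mp (hψ₁lim.eventually (eventually_gt_nhds (by linarith : m/2 < m)))
    set φ₀ : ℕ → ℕ := fun k => ψ₁ (k + N) with hφ₀
    have hφ₀mono : StrictMono φ₀ := fun a b hab => hψ₁ (by omega)
    have hne0 : ∀ k, μi (φ₀ k) Set.univ ≠ 0 := by
      intro k
      have h2 : m/2 < r (φ₀ k) := hN _ (by omega)
      intro h; rw [hφ₀] at *; simp [hr, h] at h2; linarith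
    have hnetop : ∀ k, μi (φ₀ k) Set.univ ≠ ∞ := fun k => measure_ne_top _ _
    set p : ℕ → Measure Ω := fun k => (μi (φ₀ k) Set.univ)⁻¹ • μi (φ₀ k) with hp
    have hp_prob : ∀ k, IsProbabilityMeasure (p k) := by
      intro k
      exact ⟨by rw [hp]; simp [Measure.smul_apply, smul_eq_mul,
        ENNReal.inv_mul_cancel (hne0 k) (hnetop k)]⟩
    have hge : ∀ k, ENNReal.ofReal (m/2) ≤ μi (φ₀ k) Set.univ := by
      intro k
      have h2 : m/2 ≤ r (φ₀ k) := le_of_lt (hN _ (by omega))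
      calc ENNReal.ofReal (m/2) ≤ ENNReal.ofReal (r (φ₀ k)) := ENNReal.ofReal_le_ofReal h2
        _ = μi (φ₀ k) Set.univ := ENNReal.ofReal_toReal (hnetop k)
    have hptight : ∀ ε : ℝ≥0∞, 0 < ε → ∃ K : Set Ω, IsCompact K ∧ ∀ k, p k Kᶜ < ε := by
      intro ε hε
      have hm2 : (0:ℝ) < m/2 := by linarith
      have hδpos : 0 < ε * ENNReal.ofReal (m/2) :=
        ENNReal.mul_pos hε.ne' (by simpa using (ENNReal.ofReal_pos.mpr hm2).ne')
      obtain ⟨K, hK, hKlt⟩ := htight _ hδpos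
      refine ⟨K, hK, fun k => ?_⟩
      have h1 : p k Kᶜ ≤ (ENNReal.ofReal (m/2))⁻¹ * μi (φ₀ k) Kᶜ := by
        rw [hp]; simp only [Measure.smul_apply, smul_eq_mul]
        exact mul_le_mul' (ENNReal.inv_le_inv.mpr (hge k)) le_rfl
      refine h1.trans_lt ?_
      have hofne0 : ENNReal.ofReal (m/2) ≠ 0 := (ENNReal.ofReal_pos.mpr hm2).ne'
      have hofnetop : ENNReal.ofReal (m/2) ≠ ∞ := ENNReal.ofReal_ne_top
      calc (ENNReal.ofReal (m/2))⁻¹ * μi (φ₀ k) Kᶜ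
          < (ENNReal.ofReal (m/2))⁻¹ * (ε * ENNReal.ofReal (m/2)) := by
            refine ENNReal.mul_lt_mul_right ?_ ?_ (hKlt _)
            · exact ENNReal.inv_ne_zero.mpr hofnetop
            · exact ENNReal.inv_ne_top.mpr hofne0
        _ = ε := by
            rw [mul_comm ε, ← mul_assoc, ENNReal.inv_mul_cancel hofne0 hofnetop, one_mul]
      done
    haveI := hp_prob
    obtain ⟨ψ₂, P, hψ₂, hPprob, hPlim⟩ := prokhorov_prob p hptight
    refine ⟨fun k => φ₀ (ψ₂ k), ENNReal.ofReal m • P, hφ₀mono.comp hψ₂, ?_, ?_⟩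
    · refine ⟨?_⟩
      rw [Measure.smul_apply, smul_eq_mul]
      exact ENNReal.mul_lt_top ENNReal.ofReal_lt_top (measure_lt_top _ _)
    · rintro h ⟨M, hM⟩ hcont
      set f : BoundedContinuousFunction Ω ℝ :=
        BoundedContinuousFunction.ofNormedAddCommGroup h hcont M
          (fun x => (Real.norm_eq_abs _).le.trans (hM x)) with hf
      have hcoe : ∀ x, f x = h x := fun x => rfl
      have hmeq : ∀ k, μi (φ₀ (ψ₂ k)) = (μi (φ₀ (ψ₂ k)) Set.univ) • p (ψ₂ k) := by
        intro k
        rw [hp, smul_smul, ENNReal.mul_inv_cancel (hne0 _) (hnetop _), one_smul]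
      have hint : ∀ k, ∫ x, h x ∂(μi (φ₀ (ψ₂ k)))
          = r (φ₀ (ψ₂ k)) * ∫ x, h x ∂(p (ψ₂ k)) := by
        intro k
        rw [hmeq k, integral_smul_measure, smul_eq_mul, hr]
      have hrlim : Tendsto (fun k => r (φ₀ (ψ₂ k))) atTop (𝓝 m) := by
        have : Tendsto (fun k => ψ₂ k + N) atTop atTop :=
          (tendsto_add_atTop_nat N).comp hψ₂.tendsto_atTop
        exact hψ₁lim.comp this
      have hIlim : Tendsto (fun k => ∫ x, h x ∂(p (ψ₂ k))) atTop (𝓝 (∫ x, h x ∂P)) := by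
        have := hPlim f
        have h2 : Tendsto (fun k => ∫ x, f x ∂(p (ψ₂ k))) atTop (𝓝 (∫ x, f x ∂P)) := this
        simpa only [hcoe] using h2
      have := hrlim.mul hIlim
      simp only [hint]
      convert this using 2
      rw [integral_smul_measure, ENNReal.toReal_ofReal (le_of_lt hmpos), smul_eq_mul]
  done
end

section
/- Let Ω be a metric space, {μ_i} probability measures on Ω converging weakly to μ, and {η_i} a sequence of signed Borel measures with η_i = γ_i · μ_i (density γ_i) where |γ_i(ω)| ≤ M for μ_i-a.e. ω, for a constant M > 0. Suppose η_i converges weakly to a signed measure η, in the sense that η_i(B) → η(B) for all Borel sets B in a family generating the Borel σ-algebra and closed under the conditions of the Portmanteau theorem. Then η is absolutely continuous with respect to μ, and its Radon–Nikodym density γ satisfies |γ(ω)| ≤ M for μ-a.e. ω. -/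
open MeasureTheory Filter Topology ENNReal
open scoped symmDiff

/-- Any signed measure value is bounded in absolute value by the total variation
(posPart + negPart of the Jordan decomposition). -/
lemma abs_signedMeasure_le_jordan {Ω : Type*} [MeasurableSpace Ω] (η : SignedMeasure Ω)
    {A : Set Ω} (hA : MeasurableSet A) :
    η A = (η.toJordanDecomposition.posPart A).toReal
        - (η.toJordanDecomposition.negPart A).toReal := by
  conv_lhs => rw [← η.toSignedMeasure_toJordanDecomposition]
  rw [JordanDecomposition.toSignedMeasure, Measure.toSignedMeasure_sub_apply hA]
  rfl

/-- If η_i = γ_i·μ_i with uniformly bounded densities, μ_i → μ weakly, and η_i(B) → η(B)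
on a generating π-system of Borel sets on which also μ_i(B) → μ(B), then η ≪ μ with
Radon–Nikodym density bounded by the same constant M, μ-a.e. -/
theorem signedMeasure_limit_absolutelyContinuous_with_bounded_density
    {Ω : Type*} [MetricSpace Ω] [m : MeasurableSpace Ω] [BorelSpace Ω]
    (μi : ℕ → Measure Ω) (μ : Measure Ω)
    [∀ i, IsProbabilityMeasure (μi i)] [IsProbabilityMeasure μ]
    (hweak : ∀ h : Ω → ℝ, (∃ M : ℝ, ∀ x, |h x| ≤ M) → Continuous h →
      Tendsto (fun i => ∫ x, h x ∂(μi i)) atTop (𝓝 (∫ x, h x ∂μ)))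
    (γi : ℕ → Ω → ℝ) (hmeas : ∀ i, Measurable (γi i))
    (M : ℝ) (hM : 0 < M) (hbd : ∀ i, ∀ᵐ ω ∂(μi i), |γi i ω| ≤ M)
    (hint : ∀ i, Integrable (γi i) (μi i))
    (η : SignedMeasure Ω)
    (S : Set (Set Ω)) (hSalg : IsSetAlgebra S) (hSgen : MeasurableSpace.generateFrom S = m)
    (hSmeas : ∀ B ∈ S, MeasurableSet B)
    (hSconv : ∀ B ∈ S,
      Tendsto (fun i => ∫ x in B, γi i x ∂(μi i)) atTop (𝓝 (η B)) ∧
      Tendsto (fun i => μi i B) atTop (𝓝 (μ B))) :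
    η ≪ᵥ μ.toENNRealVectorMeasure ∧
    ∃ γ : Ω → ℝ, Measurable γ ∧ (∀ᵐ ω ∂μ, |γ ω| ≤ M) ∧
      ∀ B : Set Ω, MeasurableSet B → η B = ∫ x in B, γ x ∂μ := by
  -- Step 1: the bound `|η B| ≤ M * μ B` on the generating algebra `S`.
  have hS_bound : ∀ B ∈ S, |η B| ≤ M * (μ B).toReal := by
    intro B hB
    obtain ⟨h1, h2⟩ := hSconv B hB
    have hμB : Tendsto (fun i => (μi i B).toReal) atTop (𝓝 ((μ B).toReal)) :=
      (ENNReal.tendsto_toReal (measure_ne_top μ B)).comp h2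
    refine le_of_tendsto_of_tendsto' h1.abs (hμB.const_mul M) fun i => ?_
    calc |∫ x in B, γi i x ∂(μi i)| ≤ ∫ x in B, |γi i x| ∂(μi i) := by
          simpa [Real.norm_eq_abs] using
            norm_integral_le_integral_norm (μ := (μi i).restrict B) (γi i)
      _ ≤ ∫ _x in B, M ∂(μi i) := by
          refine integral_mono_ae ((hint i).abs.restrict) (integrable_const M)
            (ae_restrict_of_ae (hbd i))
      _ = M * (μi i B).toReal := by rw [setIntegral_const, smul_eq_mul, mul_comm]; rfl
  set P := η.toJordanDecomposition.posPart with hP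
  set N := η.toJordanDecomposition.negPart with hN
  have hη_eq : ∀ A : Set Ω, MeasurableSet A → η A = (P A).toReal - (N A).toReal :=
    fun A hA => abs_signedMeasure_le_jordan η hA
  -- Step 2: extend the bound to all measurable sets by approximation.
  have hdense : (μ + P + N).MeasureDense S :=
    Measure.MeasureDense.of_generateFrom_isSetAlgebra_finite (μ + P + N) hSalg hSgen.symm
  have key : ∀ B : Set Ω, MeasurableSet B → |η B| ≤ M * (μ B).toReal := by
    intro B hB
    refine le_of_forall_pos_le_add fun ε hε => ?_
    set δ := ε / (M + 2) with hδdef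
    have hδ : 0 < δ := div_pos hε (by linarith)
    obtain ⟨t, ht, hsymm⟩ := hdense.approx B hB (measure_ne_top _ _) δ hδ
    have htm := hSmeas t ht
    set ν := μ + P + N with hν
    have hsd : (ν (B ∆ t)).toReal < δ := by
      have := (ENNReal.lt_ofReal_iff_toReal_lt (measure_ne_top ν _)).mp hsymm
      exact this
    -- each sub-measure of ν on B ∆ t is at most δ
    have hmono : ∀ ρ : Measure Ω, ρ (B ∆ t) ≤ ν (B ∆ t) → (ρ (B ∆ t)).toReal < δ := by
      intro ρ hρ
      refine lt_of_le_of_lt ?_ hsd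
      exact ENNReal.toReal_mono (measure_ne_top ν _) hρ
    have hνapp : ν (B ∆ t) = μ (B ∆ t) + P (B ∆ t) + N (B ∆ t) := by
      simp [hν, Measure.add_apply]
    have hμle : μ (B ∆ t) ≤ ν (B ∆ t) := by
      rw [hνapp]; exact (self_le_add_right _ _).trans (self_le_add_right _ _)
    have hPle : P (B ∆ t) ≤ ν (B ∆ t) := by
      rw [hνapp]; exact (self_le_add_left _ _).trans (self_le_add_right _ _)
    have hNle : N (B ∆ t) ≤ ν (B ∆ t) := by rw [hνapp]; exact self_le_add_left _ _
    have hμd : |(μ B).toReal - (μ t).toReal| ≤ (μ (B ∆ t)).toReal :=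
      abs_measureReal_sub_le_measureReal_symmDiff hB.nullMeasurableSet htm.nullMeasurableSet
    have hPd : |(P B).toReal - (P t).toReal| ≤ (P (B ∆ t)).toReal :=
      abs_measureReal_sub_le_measureReal_symmDiff hB.nullMeasurableSet htm.nullMeasurableSet
    have hNd : |(N B).toReal - (N t).toReal| ≤ (N (B ∆ t)).toReal :=
      abs_measureReal_sub_le_measureReal_symmDiff hB.nullMeasurableSet htm.nullMeasurableSet
    have hμδ := (hmono μ hμle)
    have hPδ := (hmono P hPle)
    have hNδ := (hmono N hNle)
    have hηt := hS_bound t ht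
    have heB := hη_eq B hB
    have het := hη_eq t htm
    -- |η B - η t| ≤ P(B∆t) + N(B∆t) < 2δ
    have hdiff : |η B - η t| < 2 * δ := by
      rw [heB, het]
      have : (P B).toReal - (N B).toReal - ((P t).toReal - (N t).toReal)
          = ((P B).toReal - (P t).toReal) - ((N B).toReal - (N t).toReal) := by ring
      rw [this]
      calc |((P B).toReal - (P t).toReal) - ((N B).toReal - (N t).toReal)|
          ≤ |(P B).toReal - (P t).toReal| + |(N B).toReal - (N t).toReal| := abs_sub _ _
        _ < 2 * δ := by
            have := lt_of_le_of_lt hPd hPδ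
            have := lt_of_le_of_lt hNd hNδ
            linarith
    have hμt_le : (μ t).toReal ≤ (μ B).toReal + δ := by
      have h1 : (μ t).toReal - (μ B).toReal ≤ |(μ B).toReal - (μ t).toReal| := by
        rw [abs_sub_comm]; exact le_abs_self _
      have := lt_of_le_of_lt hμd hμδ
      linarith
    have h1 : |η B| ≤ |η t| + |η B - η t| := by
      have := abs_add_le (η t) (η B - η t)
      simpa using this
    have h2 : M * (μ t).toReal ≤ M * (μ B).toReal + M * δ := by
      have := mul_le_mul_of_nonneg_left hμt_le hM.le
      linarith [mul_add M ((μ B).toReal) δ]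
    have hdelta : (M + 2) * δ = ε := by
      rw [hδdef]; field_simp
    nlinarith [hdiff, hηt]
  -- Step 3: absolute continuity.
  have hac : η ≪ᵥ μ.toENNRealVectorMeasure := by
    refine VectorMeasure.AbsolutelyContinuous.mk fun B hB h0 => ?_
    rw [Measure.toENNRealVectorMeasure_apply_measurable hB] at h0
    have hk := key B hB
    rw [h0] at hk
    simp only [ENNReal.toReal_zero, mul_zero] at hk
    exact abs_nonpos_iff.mp hk
  -- Step 4: the Radon–Nikodym density.
  have hintγ : Integrable (η.rnDeriv μ) μ := SignedMeasure.integrable_rnDeriv η μ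
  have happ : ∀ B : Set Ω, MeasurableSet B → η B = ∫ x in B, η.rnDeriv μ x ∂μ := by
    intro B hB
    conv_lhs => rw [← SignedMeasure.withDensityᵥ_rnDeriv_eq η μ hac]
    rw [withDensityᵥ_apply hintγ hB]
  refine ⟨hac, η.rnDeriv μ, SignedMeasure.measurable_rnDeriv η μ, ?_, happ⟩
  have hub : η.rnDeriv μ ≤ᵐ[μ] fun _ => M := by
    refine ae_le_of_forall_setIntegral_le hintγ (integrable_const M) fun s hs _ => ?_
    rw [← happ s hs, setIntegral_const, smul_eq_mul, mul_comm]
    exact (le_abs_self _).trans (key s hs)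
  have hlb : (fun _ => -M) ≤ᵐ[μ] η.rnDeriv μ := by
    refine ae_le_of_forall_setIntegral_le (integrable_const (-M)) hintγ fun s hs _ => ?_
    rw [← happ s hs, setIntegral_const, smul_eq_mul, mul_neg, mul_comm]
    exact (neg_le_neg (key s hs)).trans (neg_abs_le _)
  filter_upwards [hub, hlb] with ω h1 h2
  exact abs_le.mpr ⟨h2, h1⟩
end

section
/- Under the assumptions of the preceding setup (uniform Lipschitz constant k_f(t) in x and uniform bound c on f), for any two measurable controls u, u' with values u(t), u'(t) ∈ U(t), and for every ω, the associated trajectories with common initial condition x_0 satisfy ‖x(·,u,ω) − x(·,u',ω)‖_{W^{1,1}} ≤ 2c·exp(∫_0^T k_f(s) ds)·meas{t ∈ [0,T] : u(t) ≠ u'(t)}. -/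
open MeasureTheory Set Filter intervalIntegral

lemma mono_ftc_le {G ρ : ℝ → ℝ} (hG : Monotone G) (hGc : Continuous G)
    (hd : ∀ᵐ x ∂volume, HasDerivAt G (ρ x) x) {a b : ℝ} (hab : a ≤ b) :
    ∫ x in a..b, ρ x ≤ G b - G a := by
  have hs : ∀ x, hG.stieltjesFunction x = G x := by
    intro x
    exact rightLim_eq_of_tendsto
      ((hGc.tendsto x).mono_left nhdsWithin_le_nhds)
  set μ := hG.stieltjesFunction.measure with hμ
  have hae : ∀ᵐ x ∂volume, ρ x = (μ.rnDeriv volume x).toReal := by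
    filter_upwards [hd, hG.ae_hasDerivAt] with x h1 h2 using h1.unique h2
  calc ∫ x in a..b, ρ x = ∫ x in a..b, (μ.rnDeriv volume x).toReal :=
        intervalIntegral.integral_congr_ae (by filter_upwards [hae] with x hx _ using hx)
    _ = ∫ x in Ioc a b, (μ.rnDeriv volume x).toReal := intervalIntegral.integral_of_le hab
    _ ≤ (μ (Ioc a b)).toReal := by
        apply Measure.setIntegral_toReal_rnDeriv_le
        rw [hμ, StieltjesFunction.measure_Ioc]
        exact ENNReal.ofReal_ne_top
    _ = G b - G a := by
        rw [hμ, StieltjesFunction.measure_Ioc, hs, hs,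
          ENNReal.toReal_ofReal (sub_nonneg.2 (hG hab))]

/-- Grönwall inequality in integral form, with an integrable nonnegative coefficient. -/
lemma gronwall_integral_form {g φ : ℝ → ℝ} {T A : ℝ} (hT : 0 ≤ T) (hA : 0 ≤ A)
    (hgm : Measurable g) (hg0 : ∀ s, 0 ≤ g s) (hgz : ∀ s ≤ (0 : ℝ), g s = 0)
    (hgi : Integrable g volume)
    (hφm : MonotoneOn φ (Icc 0 T))
    (hgφ : IntervalIntegrable (fun s => g s * φ s) volume 0 T)
    (hineq : ∀ t ∈ Icc (0 : ℝ) T, φ t ≤ A + ∫ s in (0 : ℝ)..t, g s * φ s) :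
    φ T ≤ A * Real.exp (∫ s in (0 : ℝ)..T, g s) := by
  set K : ℝ → ℝ := fun t => ∫ s in (0 : ℝ)..t, g s with hK
  have hgiv : ∀ a b : ℝ, IntervalIntegrable g volume a b := fun a b => hgi.intervalIntegrable
  have hKmono : Monotone K := by
    intro a b hab
    have := intervalIntegral.integral_add_adjacent_intervals (hgiv 0 a) (hgiv a b)
    have h2 : 0 ≤ ∫ s in a..b, g s :=
      intervalIntegral.integral_nonneg hab (fun x _ => hg0 x)
    simp only [hK]; linarith [this]
  have hKc : Continuous K := hgi.continuous_primitive 0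
  have hK0 : ∀ s, 0 ≤ K s := by
    intro s
    rcases le_or_gt 0 s with h | h
    · exact intervalIntegral.integral_nonneg h (fun x _ => hg0 x)
    · have : K s = ∫ x in (0:ℝ)..s, (0:ℝ) := by
        apply intervalIntegral.integral_congr
        intro x hx
        rw [uIcc_of_ge h.le] at hx
        exact hgz x hx.2
      rw [hK] at this ⊢
      rw [this]
      simp
  -- a.e. derivative of K is g
  have hKd : ∀ᵐ x ∂volume, HasDerivAt K (g x) x := by
    have hν : hKmono.stieltjesFunction.measure =
        volume.withDensity (fun s => ENNReal.ofReal (g s)) := by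
      refine Measure.ext_of_Ioc _ _ (fun a b hab => ?_)
      have hsF : ∀ x, hKmono.stieltjesFunction x = K x := fun x =>
        rightLim_eq_of_tendsto
          ((hKc.tendsto x).mono_left nhdsWithin_le_nhds)
      rw [StieltjesFunction.measure_Ioc, hsF, hsF,
        withDensity_apply _ measurableSet_Ioc]
      have h1 : K b - K a = ∫ s in Ioc a b, g s := by
        have := intervalIntegral.integral_add_adjacent_intervals (hgiv 0 a) (hgiv a b)
        rw [hK]
        rw [← intervalIntegral.integral_of_le hab.le]
        linarith [this]
      rw [h1, ofReal_integral_eq_lintegral_ofReal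
        (hgi.integrableOn) (ae_of_all _ (fun x => hg0 x))]
    have h2 := hKmono.ae_hasDerivAt
    rw [hν] at h2
    have h3 : (fun s => ENNReal.ofReal (g s)) =ᵐ[volume]
        (volume.withDensity (fun s => ENNReal.ofReal (g s))).rnDeriv volume :=
      (Measure.rnDeriv_withDensity volume (hgm.ennreal_ofReal)).symm
    filter_upwards [h2, h3] with x hx1 hx2
    have : ((volume.withDensity (fun s => ENNReal.ofReal (g s))).rnDeriv volume x).toReal
        = g x := by rw [← hx2, ENNReal.toReal_ofReal (hg0 x)]
    rwa [this] at hx1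
  -- key moment bound
  have key : ∀ (i : ℕ), ∀ t ∈ Icc (0 : ℝ) T,
      (∫ s in (0 : ℝ)..t, g s * K s ^ i) ≤ K t ^ (i + 1) / (i + 1) := by
    intro i t ht
    have hmono : Monotone (fun s => K s ^ (i + 1) / (i + 1 : ℝ)) := by
      intro a b hab
      have := pow_le_pow_left₀ (hK0 a) (hKmono hab) (i + 1)
      have hpos : (0 : ℝ) < i + 1 := by positivity
      exact (div_le_div_iff_of_pos_right hpos).mpr this
    have hcont : Continuous (fun s => K s ^ (i + 1) / (i + 1 : ℝ)) :=
      (hKc.pow (i + 1)).div_const _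
    have hder : ∀ᵐ x ∂volume,
        HasDerivAt (fun s => K s ^ (i + 1) / (i + 1 : ℝ)) (g x * K x ^ i) x := by
      filter_upwards [hKd] with x hx
      have h := (hx.pow (i + 1)).div_const ((i + 1 : ℕ) : ℝ)
      have he : ((i + 1 : ℕ) : ℝ) * K x ^ (i + 1 - 1) * g x / ((i + 1 : ℕ) : ℝ)
          = g x * K x ^ i := by
        field_simp
        rw [Nat.add_sub_cancel]
        ring
      rw [he] at h
      convert h using 2 <;> push_cast <;> rfl
    have := mono_ftc_le hmono hcont hder ht.1
    have hK00 : K 0 = 0 := by simp [hK]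
    rw [hK00] at this
    simpa using this
  -- if φ T < 0 we are done
  rcases lt_or_ge (φ T) 0 with hB | hB
  · have : 0 ≤ A * Real.exp (∫ s in (0 : ℝ)..T, g s) := by positivity
    linarith
  set B := φ T with hBdef
  have hφB : ∀ s ∈ Icc (0 : ℝ) T, φ s ≤ B := fun s hs => hφm hs (right_mem_Icc.2 hT) hs.2
  -- iterated claim
  have claim : ∀ N : ℕ, ∀ t ∈ Icc (0 : ℝ) T,
      φ t ≤ A * (∑ i ∈ Finset.range N, K t ^ i / (Nat.factorial i : ℝ))
        + B * (K t ^ N / (Nat.factorial N : ℝ)) := by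
    intro N
    induction N with
    | zero => intro t ht; simpa using hφB t ht
    | succ N ih =>
      intro t ht
      refine (hineq t ht).trans ?_
      have hKint : ∀ j : ℕ, IntervalIntegrable (fun s => g s * K s ^ j) volume 0 t :=
        fun j => (hgiv 0 t).mul_continuousOn ((hKc.pow j).continuousOn)
      have hRHSc : Continuous (fun s : ℝ =>
          A * (∑ i ∈ Finset.range N, K s ^ i / (Nat.factorial i : ℝ))
            + B * (K s ^ N / (Nat.factorial N : ℝ))) := by
        apply Continuous.add
        · exact continuous_const.mul (continuous_finset_sum _
            (fun i _ => (hKc.pow i).div_const _))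
        · exact continuous_const.mul ((hKc.pow N).div_const _)
      have hstep : (∫ s in (0 : ℝ)..t, g s * φ s)
          ≤ ∫ s in (0 : ℝ)..t, g s *
            (A * (∑ i ∈ Finset.range N, K s ^ i / (Nat.factorial i : ℝ))
              + B * (K s ^ N / (Nat.factorial N : ℝ))) := by
        apply intervalIntegral.integral_mono_on ht.1
          (hgφ.mono_set (by rw [uIcc_of_le ht.1, uIcc_of_le hT]; exact Icc_subset_Icc le_rfl ht.2))
          ((hgiv 0 t).mul_continuousOn hRHSc.continuousOn)
        intro s hs
        exact mul_le_mul_of_nonneg_left (ih s ⟨hs.1, hs.2.trans ht.2⟩) (hg0 s)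
      have h4 : A + (∫ s in (0 : ℝ)..t, g s * φ s) ≤ A + ∫ s in (0 : ℝ)..t, g s *
            (A * (∑ i ∈ Finset.range N, K s ^ i / (Nat.factorial i : ℝ))
              + B * (K s ^ N / (Nat.factorial N : ℝ))) := by linarith
      refine h4.trans ?_
      -- compute/bound the RHS integral
      have hexpand : (∫ s in (0 : ℝ)..t, g s *
            (A * (∑ i ∈ Finset.range N, K s ^ i / (Nat.factorial i : ℝ))
              + B * (K s ^ N / (Nat.factorial N : ℝ))))
          = (∑ i ∈ Finset.range N, (A / (Nat.factorial i : ℝ)) *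
              ∫ s in (0 : ℝ)..t, g s * K s ^ i)
            + (B / (Nat.factorial N : ℝ)) * ∫ s in (0 : ℝ)..t, g s * K s ^ N := by
        have hptw : ∀ s : ℝ, g s *
            (A * (∑ i ∈ Finset.range N, K s ^ i / (Nat.factorial i : ℝ))
              + B * (K s ^ N / (Nat.factorial N : ℝ)))
            = (∑ i ∈ Finset.range N, (A / (Nat.factorial i : ℝ)) * (g s * K s ^ i))
              + (B / (Nat.factorial N : ℝ)) * (g s * K s ^ N) := by
          intro s
          simp only [mul_add, Finset.mul_sum]
          congr 1
          · exact Finset.sum_congr rfl (fun i _ => by ring)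
          · ring
        simp_rw [hptw]
        have hsint : IntervalIntegrable (fun x => ∑ i ∈ Finset.range N,
            A / (Nat.factorial i : ℝ) * (g x * K x ^ i)) volume 0 t := by
          have := IntervalIntegrable.sum (μ := volume) (a := 0) (b := t) (Finset.range N)
            (f := fun i => fun x => A / (Nat.factorial i : ℝ) * (g x * K x ^ i))
            (fun i _ => (hKint i).const_mul _)
          have heq : (fun x => ∑ i ∈ Finset.range N,
              A / (Nat.factorial i : ℝ) * (g x * K x ^ i))
              = ∑ i ∈ Finset.range N, fun x => A / (Nat.factorial i : ℝ) * (g x * K x ^ i) := by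
            funext x
            simp [Finset.sum_apply]
          rw [heq]
          exact this
        rw [intervalIntegral.integral_add hsint ((hKint N).const_mul _),
          intervalIntegral.integral_finset_sum (fun i _ => (hKint i).const_mul _)]
        simp_rw [intervalIntegral.integral_const_mul]
      rw [hexpand]
      have hsumle : (∑ i ∈ Finset.range N, (A / (Nat.factorial i : ℝ)) *
              ∫ s in (0 : ℝ)..t, g s * K s ^ i)
          ≤ ∑ i ∈ Finset.range N, (A / (Nat.factorial i : ℝ)) * (K t ^ (i + 1) / (i + 1)) := by
        apply Finset.sum_le_sum
        intro i _
        exact mul_le_mul_of_nonneg_left (key i t ht) (by positivity)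
      have hlast : (B / (Nat.factorial N : ℝ)) * ∫ s in (0 : ℝ)..t, g s * K s ^ N
          ≤ (B / (Nat.factorial N : ℝ)) * (K t ^ (N + 1) / (N + 1)) :=
        mul_le_mul_of_nonneg_left (key N t ht) (by positivity)
      refine le_trans (add_le_add le_rfl (add_le_add hsumle hlast)) (le_of_eq ?_)
      -- algebraic identity
      rw [Finset.sum_range_succ' (fun i => K t ^ i / (Nat.factorial i : ℝ)) N]
      have h1 : ∀ i : ℕ, (A / (Nat.factorial i : ℝ)) * (K t ^ (i + 1) / ((i : ℝ) + 1))
          = A * (K t ^ (i + 1) / (Nat.factorial (i + 1) : ℝ)) := by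
        intro i
        rw [Nat.factorial_succ, div_mul_div_comm, ← mul_div_assoc]
        push_cast
        rw [mul_comm ((Nat.factorial i : ℝ)) _]
      have h3 : (B / (Nat.factorial N : ℝ)) * (K t ^ (N + 1) / ((N : ℝ) + 1))
          = B * (K t ^ (N + 1) / (Nat.factorial (N + 1) : ℝ)) := by
        rw [Nat.factorial_succ, div_mul_div_comm, ← mul_div_assoc]
        push_cast
        rw [mul_comm ((Nat.factorial N : ℝ)) _]
      simp_rw [h1]
      rw [h3, mul_add, Finset.mul_sum]
      simp [Nat.factorial_zero]
      ring
  -- pass to the limit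
  have hKT0 : 0 ≤ K T := hK0 T
  have hbound : ∀ N : ℕ, φ T ≤ A * Real.exp (K T) + B * (K T ^ N / (Nat.factorial N : ℝ)) := by
    intro N
    refine (claim N T (right_mem_Icc.2 hT)).trans ?_
    have := Real.sum_le_exp_of_nonneg hKT0 N
    have hAle : A * (∑ i ∈ Finset.range N, K T ^ i / (Nat.factorial i : ℝ))
        ≤ A * Real.exp (K T) := mul_le_mul_of_nonneg_left this hA
    linarith
  have htend : Tendsto (fun N : ℕ => A * Real.exp (K T)
      + B * (K T ^ N / (Nat.factorial N : ℝ))) atTop (nhds (A * Real.exp (K T) + B * 0)) :=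
    tendsto_const_nhds.add ((FloorSemiring.tendsto_pow_div_factorial_atTop (K T)).const_mul B)
  have := ge_of_tendsto' htend hbound
  simpa [hK] using this

/-- Lemma 5.1(i): the W^{1,1}-distance between trajectories corresponding to two
controls is bounded by 2c·exp(∫₀ᵀ k_f)·(Ekeland distance of the controls). -/
theorem trajectory_W11_estimate_in_control
    {Ω : Type*} [MetricSpace Ω] {n m : ℕ}
    (T : ℝ) (hT : 0 < T)
    (U : ℝ → Set (EuclideanSpace ℝ (Fin m)))
    (f : ℝ → EuclideanSpace ℝ (Fin n) → EuclideanSpace ℝ (Fin m) → Ω →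
      EuclideanSpace ℝ (Fin n))
    (kf : ℝ → ℝ) (hkf : IntervalIntegrable kf volume 0 T)
    (c : ℝ)
    (hlip : ∀ᵐ t ∂volume, t ∈ Icc (0 : ℝ) T → ∀ x x' v ω, v ∈ U t →
      ‖f t x v ω - f t x' v ω‖ ≤ kf t * ‖x - x'‖)
    (hbd : ∀ᵐ t ∂volume, t ∈ Icc (0 : ℝ) T → ∀ x v ω, v ∈ U t → ‖f t x v ω‖ ≤ c)
    (x0 : EuclideanSpace ℝ (Fin n)) (ω : Ω)
    (u u' : ℝ → EuclideanSpace ℝ (Fin m))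
    (hu : ∀ᵐ t ∂volume, t ∈ Icc (0 : ℝ) T → u t ∈ U t)
    (hu' : ∀ᵐ t ∂volume, t ∈ Icc (0 : ℝ) T → u' t ∈ U t)
    (xu xu' : ℝ → EuclideanSpace ℝ (Fin n))
    (hxuint : IntervalIntegrable (fun s => f s (xu s) (u s) ω) volume 0 T)
    (hxu'int : IntervalIntegrable (fun s => f s (xu' s) (u' s) ω) volume 0 T)
    (hxu : ∀ t ∈ Icc (0 : ℝ) T, xu t = x0 + ∫ s in (0 : ℝ)..t, f s (xu s) (u s) ω)
    (hxu' : ∀ t ∈ Icc (0 : ℝ) T, xu' t = x0 + ∫ s in (0 : ℝ)..t, f s (xu' s) (u' s) ω) :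
    (∫ t in (0 : ℝ)..T, ‖f t (xu t) (u t) ω - f t (xu' t) (u' t) ω‖)
      ≤ 2 * c * Real.exp (∫ s in (0 : ℝ)..T, kf s) *
        (volume {t | t ∈ Icc (0 : ℝ) T ∧ u t ≠ u' t}).toReal := by
  -- `c` is nonnegative
  have hc : 0 ≤ c := by
    have hae := (hbd.and hu)
    have hne : ∃ t ∈ Icc (0 : ℝ) T,
        (∀ x v ω', v ∈ U t → ‖f t x v ω'‖ ≤ c) ∧ u t ∈ U t := by
      by_contra hcon
      push_neg at hcon
      have hsub : Icc (0 : ℝ) T ⊆ {t | ¬ ((t ∈ Icc (0 : ℝ) T → ∀ x v ω', v ∈ U t → ‖f t x v ω'‖ ≤ c)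
          ∧ (t ∈ Icc (0 : ℝ) T → u t ∈ U t))} := by
        intro t ht hmem
        exact hcon t ht (hmem.1 ht) (hmem.2 ht)
      have h0 : volume (Icc (0 : ℝ) T) = 0 :=
        measure_mono_null hsub hae
      rw [Real.volume_Icc] at h0
      simp only [ENNReal.ofReal_eq_zero] at h0
      linarith
    obtain ⟨t₀, ht₀, hb₀, hu₀⟩ := hne
    exact (norm_nonneg _).trans (hb₀ (xu t₀) (u t₀) ω hu₀)
  -- trivial case `n = 0`
  rcases Nat.eq_zero_or_pos n with hn | hn
  · subst hn
    have hz : ∀ t : ℝ, ‖f t (xu t) (u t) ω - f t (xu' t) (u' t) ω‖ = 0 := by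
      intro t
      rw [Subsingleton.elim (f t (xu t) (u t) ω - f t (xu' t) (u' t) ω) 0, norm_zero]
    simp only [hz, intervalIntegral.integral_zero]
    have h1 : (0:ℝ) ≤ 2 * c := by linarith
    exact mul_nonneg (mul_nonneg h1 (Real.exp_pos _).le) ENNReal.toReal_nonneg
  -- main case: `kf` is a.e. nonnegative on `[0, T]`
  have hkf0 : ∀ᵐ t ∂volume, t ∈ Icc (0 : ℝ) T → 0 ≤ kf t := by
    filter_upwards [hlip, hu] with t h1 h2 ht
    set e : EuclideanSpace ℝ (Fin n) := EuclideanSpace.single (⟨0, hn⟩ : Fin n) (1 : ℝ) with he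
    have h3 := h1 ht 0 e (u t) ω (h2 ht)
    have h4 : ‖(0 : EuclideanSpace ℝ (Fin n)) - e‖ = 1 := by
      rw [zero_sub, norm_neg, he, EuclideanSpace.norm_single, norm_one]
    rw [h4, mul_one] at h3
    exact (norm_nonneg _).trans h3
  -- a measurable nonnegative representative of `kf` supported in `Ioc 0 T`
  have hkfIoc : IntegrableOn kf (Ioc (0:ℝ) T) volume := hkf.1
  set mkf : ℝ → ℝ := hkfIoc.aestronglyMeasurable.mk kf with hmkf
  have hmk_eq : ∀ᵐ t ∂(volume.restrict (Ioc (0:ℝ) T)), kf t = mkf t :=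
    hkfIoc.aestronglyMeasurable.ae_eq_mk
  have hmk_eq' : ∀ᵐ t ∂volume, t ∈ Ioc (0:ℝ) T → kf t = mkf t :=
    (ae_restrict_iff' measurableSet_Ioc).1 hmk_eq
  set g : ℝ → ℝ := (Ioc (0:ℝ) T).indicator (fun s => max (mkf s) 0) with hg
  have hgm : Measurable g := by
    apply Measurable.indicator _ measurableSet_Ioc
    exact (hkfIoc.aestronglyMeasurable.measurable_mk).max measurable_const
  have hg0 : ∀ s, 0 ≤ g s := by
    intro s
    rw [hg]
    by_cases hs : s ∈ Ioc (0:ℝ) T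
    · rw [indicator_of_mem hs]; exact le_max_right _ _
    · rw [indicator_of_notMem hs]
  have hgz : ∀ s ≤ (0:ℝ), g s = 0 := by
    intro s hs
    rw [hg, indicator_of_notMem (fun hmem => absurd hmem.1 (not_lt.2 hs))]
  have hgi : Integrable g volume := by
    rw [hg, integrable_indicator_iff measurableSet_Ioc]
    exact (hkfIoc.congr hmk_eq).pos_part
  -- a.e. on `Ioc 0 T`, `g = kf`
  have hgkf : ∀ᵐ t ∂volume, t ∈ Ioc (0:ℝ) T → g t = kf t := by
    filter_upwards [hmk_eq', hkf0] with t h1 h2 ht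
    rw [hg, indicator_of_mem ht, ← h1 ht, max_eq_left (h2 (Ioc_subset_Icc_self ht))]
  have hgT : (∫ s in (0:ℝ)..T, g s) = ∫ s in (0:ℝ)..T, kf s := by
    apply intervalIntegral.integral_congr_ae
    filter_upwards [hgkf] with t h1 ht
    exact h1 (by rwa [uIoc_of_le hT.le] at ht)
  -- the difference of the dynamics
  set Δ : ℝ → EuclideanSpace ℝ (Fin n) :=
    fun s => f s (xu s) (u s) ω - f s (xu' s) (u' s) ω with hΔdef
  have hΔ : IntervalIntegrable Δ volume 0 T := hxuint.sub hxu'int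
  set φ : ℝ → ℝ := fun t => ∫ s in (0:ℝ)..t, ‖Δ s‖ with hφdef
  have hΔn : IntervalIntegrable (fun s => ‖Δ s‖) volume 0 T := hΔ.norm
  have hΔnsub : ∀ a b : ℝ, a ∈ Icc (0:ℝ) T → b ∈ Icc (0:ℝ) T →
      IntervalIntegrable (fun s => ‖Δ s‖) volume a b := by
    intro a b ha hb
    apply hΔn.mono_set
    rw [uIcc_of_le hT.le]
    exact uIcc_subset_Icc ha hb
  have hφc : ContinuousOn φ (Icc (0:ℝ) T) := by
    have : IntegrableOn (fun s => ‖Δ s‖) (uIcc (0:ℝ) T) volume := by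
      rw [uIcc_of_le hT.le, integrableOn_Icc_iff_integrableOn_Ioc]
      exact hΔn.1
    have h2 := intervalIntegral.continuousOn_primitive_interval this
    rwa [uIcc_of_le hT.le] at h2
  have hφm : MonotoneOn φ (Icc (0:ℝ) T) := by
    intro a ha b hb hab
    have h1 := intervalIntegral.integral_add_adjacent_intervals
      (hΔnsub 0 a (left_mem_Icc.2 hT.le) ha) (hΔnsub a b ha hb)
    have h2 : 0 ≤ ∫ s in a..b, ‖Δ s‖ :=
      intervalIntegral.integral_nonneg hab (fun x _ => norm_nonneg _)
    rw [hφdef]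
    dsimp only
    linarith
  have hφ0 : ∀ t ∈ Icc (0:ℝ) T, 0 ≤ φ t := fun t ht =>
    intervalIntegral.integral_nonneg ht.1 (fun x _ => norm_nonneg _)
  have hgφ : IntervalIntegrable (fun s => g s * φ s) volume 0 T := by
    apply hgi.intervalIntegrable.mul_continuousOn
    rwa [uIcc_of_le hT.le]
  -- the exceptional set
  set E : Set ℝ := {t | t ∈ Icc (0 : ℝ) T ∧ u t ≠ u' t} with hE
  set E' : Set ℝ := toMeasurable volume E with hE'
  have hE'm : MeasurableSet E' := measurableSet_toMeasurable _ _
  have hEsub : E ⊆ E' := subset_toMeasurable _ _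
  have hE'vol : volume E' = volume E := measure_toMeasurable E
  have hEfin : volume E < ⊤ := by
    apply lt_of_le_of_lt (measure_mono (fun t ht => ht.1))
    rw [Real.volume_Icc]
    exact ENNReal.ofReal_lt_top
  set M : ℝ := (volume E).toReal with hM
  have hM0 : 0 ≤ M := ENNReal.toReal_nonneg
  -- the pointwise a.e. bound
  have hbound : ∀ᵐ t ∂volume, t ∈ Ioc (0:ℝ) T →
      ‖Δ t‖ ≤ g t * φ t + (2 * c) * (E'.indicator (fun _ => (1:ℝ)) t) := by
    filter_upwards [hlip, hbd, hu, hu', hgkf, hkf0] with t hl hb h2 h3 hg' hk0 ht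
    have htIcc : t ∈ Icc (0:ℝ) T := Ioc_subset_Icc_self ht
    have hxud : xu t - xu' t = ∫ s in (0:ℝ)..t, Δ s := by
      rw [hxu t htIcc, hxu' t htIcc]
      rw [intervalIntegral.integral_sub
        (hxuint.mono_set (by rw [uIcc_of_le hT.le]; exact uIcc_subset_Icc ⟨le_rfl, hT.le⟩ htIcc))
        (hxu'int.mono_set (by rw [uIcc_of_le hT.le]; exact uIcc_subset_Icc ⟨le_rfl, hT.le⟩ htIcc))]
      abel
    have hnx : ‖xu t - xu' t‖ ≤ φ t := by
      rw [hxud]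
      exact intervalIntegral.norm_integral_le_integral_norm ht.1.le
    have hkg : kf t = g t := (hg' ht).symm
    have hkfpos : 0 ≤ kf t := hk0 htIcc
    have hφt : 0 ≤ φ t := hφ0 t htIcc
    by_cases he : u t = u' t
    · have hΔeq : Δ t = f t (xu t) (u' t) ω - f t (xu' t) (u' t) ω := by rw [hΔdef]; simp [he]
      have h5 : ‖Δ t‖ ≤ kf t * ‖xu t - xu' t‖ := by
        rw [hΔeq]
        exact hl htIcc (xu t) (xu' t) (u' t) ω (h3 htIcc)
      have h6 : kf t * ‖xu t - xu' t‖ ≤ g t * φ t := by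
        rw [hkg] at hkfpos ⊢
        exact mul_le_mul le_rfl hnx (norm_nonneg _) hkfpos
      have h7 : 0 ≤ (2 * c) * (E'.indicator (fun _ => (1:ℝ)) t) := by
        apply mul_nonneg (by linarith)
        exact indicator_nonneg (fun _ _ => zero_le_one) t
      linarith
    · have htE : t ∈ E' := hEsub ⟨htIcc, he⟩
      rw [indicator_of_mem htE]
      have h5 : ‖Δ t‖ ≤ ‖f t (xu t) (u t) ω - f t (xu' t) (u t) ω‖
          + ‖f t (xu' t) (u t) ω - f t (xu' t) (u' t) ω‖ := by
        rw [hΔdef]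
        exact norm_sub_le_norm_sub_add_norm_sub _ _ _
      have h6 : ‖f t (xu t) (u t) ω - f t (xu' t) (u t) ω‖ ≤ kf t * ‖xu t - xu' t‖ :=
        hl htIcc (xu t) (xu' t) (u t) ω (h2 htIcc)
      have h7 : ‖f t (xu' t) (u t) ω - f t (xu' t) (u' t) ω‖ ≤ 2 * c := by
        have := norm_sub_le (f t (xu' t) (u t) ω) (f t (xu' t) (u' t) ω)
        have ha := hb htIcc (xu' t) (u t) ω (h2 htIcc)
        have hbb := hb htIcc (xu' t) (u' t) ω (h3 htIcc)
        linarith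
      have h8 : kf t * ‖xu t - xu' t‖ ≤ g t * φ t := by
        rw [hkg] at hkfpos ⊢
        exact mul_le_mul le_rfl hnx (norm_nonneg _) hkfpos
      linarith
  -- the integral inequality
  have hineq : ∀ t ∈ Icc (0:ℝ) T, φ t ≤ (2 * c * M) + ∫ s in (0:ℝ)..t, g s * φ s := by
    intro t ht
    have hIoc : Ioc (0:ℝ) t ⊆ Ioc 0 T := Ioc_subset_Ioc le_rfl ht.2
    have hintgφ : IntegrableOn (fun s => g s * φ s) (Ioc (0:ℝ) t) volume :=
      hgφ.1.mono_set hIoc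
    have hind : Integrable (E'.indicator (fun _ => (1:ℝ))) volume := by
      rw [integrable_indicator_iff hE'm]
      exact integrableOn_const (by rw [hE'vol]; exact hEfin.ne)
    have hindint : IntegrableOn (fun s => (2 * c) * (E'.indicator (fun _ => (1:ℝ)) s))
        (Ioc (0:ℝ) t) volume :=
      (hind.integrableOn).const_mul _
    have step1 : φ t ≤ ∫ s in Ioc (0:ℝ) t,
        (g s * φ s + (2 * c) * (E'.indicator (fun _ => (1:ℝ)) s)) := by
      rw [hφdef]
      dsimp only
      rw [intervalIntegral.integral_of_le ht.1]
      apply setIntegral_mono_ae_restrict (hΔn.1.mono_set hIoc) (hintgφ.add hindint)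
      rw [Filter.EventuallyLE]
      rw [ae_restrict_iff' measurableSet_Ioc]
      filter_upwards [hbound] with s hs hsmem
      exact hs (hIoc hsmem)
    have step2 : (∫ s in Ioc (0:ℝ) t,
        (g s * φ s + (2 * c) * (E'.indicator (fun _ => (1:ℝ)) s)))
        = (∫ s in Ioc (0:ℝ) t, g s * φ s)
          + (2 * c) * ∫ s in Ioc (0:ℝ) t, E'.indicator (fun _ => (1:ℝ)) s := by
      rw [MeasureTheory.integral_add hintgφ hindint, MeasureTheory.integral_const_mul]
    have step3 : (∫ s in Ioc (0:ℝ) t, E'.indicator (fun _ => (1:ℝ)) s) ≤ M := by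
      rw [MeasureTheory.integral_indicator hE'm, Measure.restrict_restrict hE'm, setIntegral_const,
        smul_eq_mul, mul_one]
      apply ENNReal.toReal_mono hEfin.ne
      rw [← hE'vol]
      exact measure_mono (inter_subset_left)
    have step4 : (∫ s in Ioc (0:ℝ) t, g s * φ s) = ∫ s in (0:ℝ)..t, g s * φ s :=
      (intervalIntegral.integral_of_le ht.1).symm
    have h2c : (0:ℝ) ≤ 2 * c := by linarith
    calc φ t ≤ _ := step1
      _ = _ := step2
      _ ≤ (∫ s in Ioc (0:ℝ) t, g s * φ s) + (2 * c) * M := by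
          have := mul_le_mul_of_nonneg_left step3 h2c
          linarith
      _ = (2 * c * M) + ∫ s in (0:ℝ)..t, g s * φ s := by rw [step4]; ring
  -- apply Grönwall
  have hgron := gronwall_integral_form hT.le (by positivity : (0:ℝ) ≤ 2 * c * M)
    hgm hg0 hgz hgi hφm hgφ hineq
  rw [hgT] at hgron
  calc (∫ t in (0 : ℝ)..T, ‖f t (xu t) (u t) ω - f t (xu' t) (u' t) ω‖) = φ T := rfl
    _ ≤ (2 * c * M) * Real.exp (∫ s in (0:ℝ)..T, kf s) := hgron
    _ = 2 * c * Real.exp (∫ s in (0 : ℝ)..T, kf s) *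
        (volume {t | t ∈ Icc (0 : ℝ) T ∧ u t ≠ u' t}).toReal := by
        rw [hM, hE]
        ring
end
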